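/- A symmetric matrix E is an equilibrium point of the double-bracket flow X' = [[D,X],X] if and only if E commutes with D; moreover along any solution X(t), the function f(X) = (1/2)⟨X−D, X−D⟩ (Frobenius inner product) satisfies d/dt f(X(t)) = −⟨[D,X],[D,X]⟩ ≤ 0. -/

import Mathlib

open Matrix

private lemma trace_mul_transpose_eq_sum {n : ℕ} (A B : Matrix (Fin n) (Fin n) ℝ) :
    Matrix.trace (A * Bᵀ) = ∑ p : Fin n × Fin n, A p.1 p.2 * B p.1 p.2 := by
  rw [Fintype.sum_prod_type]
  simp [Matrix.trace, Matrix.mul_apply, Matrix.diag]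

private lemma key_trace {n : ℕ} (D X : Matrix (Fin n) (Fin n) ℝ) (hD : Dᵀ = D) (hX : Xᵀ = X) :
    trace ((X - D) * ((D*X - X*D)*X - X*(D*X - X*D))ᵀ) = - trace ((D*X - X*D) * (D*X - X*D)ᵀ) := by
  simp only [transpose_sub, transpose_mul, hD, hX, Matrix.sub_mul, Matrix.mul_sub,
    Matrix.trace_sub, Matrix.mul_assoc]
  have ha : (X * (X * (X * D))).trace = (D * (X * (X * X))).trace := by
    rw [show X * (X * (X * D)) = (X * (X * X)) * D from by noncomm_ring,
      Matrix.trace_mul_comm]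
  have hb : (D * (X * (X * D))).trace = (D * (D * (X * X))).trace := by
    rw [show D * (X * (X * D)) = (D * (X * X)) * D from by noncomm_ring,
      Matrix.trace_mul_comm]
  have hc : (X * (X * (D * X))).trace = (D * (X * (X * X))).trace := by
    rw [show X * (X * (D * X)) = (X * X) * (D * X) from by noncomm_ring,
      Matrix.trace_mul_comm]
    noncomm_ring
  have he : (X * (D * (X * X))).trace = (D * (X * (X * X))).trace := by
    rw [Matrix.trace_mul_comm]
    noncomm_ring
  have hg : (X * (D * (X * D))).trace = (D * (X * (D * X))).trace := by
    rw [show X * (D * (X * D)) = (X * (D * X)) * D from by noncomm_ring,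
      Matrix.trace_mul_comm]
  have hh : (X * (D * (D * X))).trace = (D * (D * (X * X))).trace := by
    rw [Matrix.trace_mul_comm]
    noncomm_ring
  rw [ha, hb, hc, he, hg, hh]
  ring

private lemma key_trace2 {n : ℕ} (D E : Matrix (Fin n) (Fin n) ℝ) (hD : Dᵀ = D) (hE : Eᵀ = E) :
    trace ((D*E - E*D) * (D*E - E*D)ᵀ) = trace (((D*E - E*D)*E - E*(D*E - E*D)) * D) := by
  simp only [transpose_sub, transpose_mul, hD, hE, Matrix.sub_mul, Matrix.mul_sub,
    Matrix.trace_sub, Matrix.mul_assoc]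
  have hc1 : (E * (D * (E * D))).trace = (D * (E * (D * E))).trace := by
    rw [show E * (D * (E * D)) = (E * (D * E)) * D from by noncomm_ring,
      Matrix.trace_mul_comm]
  have hc2 : (E * (D * (D * E))).trace = (D * (D * (E * E))).trace := by
    rw [Matrix.trace_mul_comm]
    simp [Matrix.mul_assoc]
  have hc3 : (E * (E * (D * D))).trace = (D * (D * (E * E))).trace := by
    rw [show E * (E * (D * D)) = (E * E) * (D * D) from by noncomm_ring,
      Matrix.trace_mul_comm]
    simp [Matrix.mul_assoc]
  rw [hc1, hc2, hc3]

theorem doubleBracket_equilibria_and_descent {n : ℕ}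
    (D : Matrix (Fin n) (Fin n) ℝ) (hD : Dᵀ = D) :
    (∀ E : Matrix (Fin n) (Fin n) ℝ, Eᵀ = E →
      ((D * E - E * D) * E - E * (D * E - E * D) = 0 ↔ D * E = E * D)) ∧
    (∀ X : ℝ → Matrix (Fin n) (Fin n) ℝ, ∀ t : ℝ,
      (∀ s, (X s)ᵀ = X s) →
      (∀ i j, HasDerivAt (fun s => X s i j)
        (((D * X t - X t * D) * X t - X t * (D * X t - X t * D)) i j) t) →
      HasDerivAt (fun s => (1 / 2 : ℝ) * Matrix.trace ((X s - D) * (X s - D)ᵀ))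
        (-(Matrix.trace ((D * X t - X t * D) * (D * X t - X t * D)ᵀ))) t ∧
      -(Matrix.trace ((D * X t - X t * D) * (D * X t - X t * D)ᵀ)) ≤ 0) := by
  constructor
  · intro E hE
    constructor
    · intro h
      have h0 : trace ((D*E - E*D) * (D*E - E*D)ᵀ) = 0 := by
        rw [key_trace2 D E hD hE, h]
        simp
      rw [trace_mul_transpose_eq_sum] at h0
      have hz : ∀ p : Fin n × Fin n, (D*E - E*D) p.1 p.2 * (D*E - E*D) p.1 p.2 = 0 := by
        intro p
        have := (Finset.sum_eq_zero_iff_of_nonneg (fun p _ => mul_self_nonneg _)).mp h0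
        exact this p (Finset.mem_univ p)
      have hK : D*E - E*D = 0 := by
        ext i j
        have := hz (i, j)
        simpa using mul_self_eq_zero.mp this
      exact sub_eq_zero.mp hK
    · intro h
      rw [h, sub_self]
      simp
  · intro X t hsym hder
    set K := D * X t - X t * D with hK
    set W := K * X t - X t * K with hW
    constructor
    · have hfun : (fun s => (1 / 2 : ℝ) * Matrix.trace ((X s - D) * (X s - D)ᵀ)) =
          (fun s => ∑ p : Fin n × Fin n,
            (1 / 2 : ℝ) * ((X s p.1 p.2 - D p.1 p.2) * (X s p.1 p.2 - D p.1 p.2))) := by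
        funext s
        rw [trace_mul_transpose_eq_sum, Finset.mul_sum]
        simp [Matrix.sub_apply]
      rw [hfun]
      have hsum : HasDerivAt
          (fun s => ∑ p : Fin n × Fin n,
            (1 / 2 : ℝ) * ((X s p.1 p.2 - D p.1 p.2) * (X s p.1 p.2 - D p.1 p.2)))
          (∑ p : Fin n × Fin n,
            (1 / 2 : ℝ) * (W p.1 p.2 * (X t p.1 p.2 - D p.1 p.2) +
              (X t p.1 p.2 - D p.1 p.2) * W p.1 p.2)) t := by
        apply HasDerivAt.fun_sum
        intro p _
        have h1 : HasDerivAt (fun s => X s p.1 p.2 - D p.1 p.2) (W p.1 p.2) t :=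
          (hder p.1 p.2).sub_const _
        exact (h1.mul h1).const_mul _
      convert hsum using 1
      have heq : ∀ p : Fin n × Fin n,
          (1 / 2 : ℝ) * (W p.1 p.2 * (X t p.1 p.2 - D p.1 p.2) +
            (X t p.1 p.2 - D p.1 p.2) * W p.1 p.2) =
          (X t - D) p.1 p.2 * W p.1 p.2 := by
        intro p
        simp [Matrix.sub_apply]
        ring
      rw [Finset.sum_congr rfl (fun p _ => heq p), ← trace_mul_transpose_eq_sum]
      rw [show trace ((X t - D) * Wᵀ) = - trace (K * Kᵀ) from key_trace D (X t) hD (hsym t)]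
    · rw [neg_nonpos, trace_mul_transpose_eq_sum]
      exact Finset.sum_nonneg (fun p _ => mul_self_nonneg _)
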